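/- Under the standing hypotheses, assume in addition 0 < η < e^{σ}, e^{σ} + η < 1, and σ + u > 0. Then for every x ∈ ℝ³ with |P_L x| = 1 and 0 < x₃ < 1 there exists t > 0 such that 0 < G₃(s,x) < 1 for all s ∈ [0,t) and G₃(t,x) = 1. -/

import Mathlib

noncomputable section
open Real Set

abbrev R3 := EuclideanSpace ℝ (Fin 3)

/-- Orthogonal projection onto `L = ℝe₁ ⊕ ℝe₂`. -/
def PL (x : R3) : R3 := WithLp.toLp 2 (fun i => if (i : ℕ) = 2 then 0 else x i)

/-- Orthogonal projection onto `U = ℝe₃`. -/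
def PU (x : R3) : R3 := WithLp.toLp 2 (fun i => if (i : ℕ) = 2 then x i else 0)

/-- The plane `L = ℝe₁ ⊕ ℝe₂`. -/
def Lset : Set R3 := {x | x 2 = 0}

/-- The line `U = ℝe₃`. -/
def Uset : Set R3 := {x | x 0 = 0 ∧ x 1 = 0}

/-- `B₁ = {x : |P_L x| ≤ 1, |P_U x| ≤ 1}`. -/
def B1 : Set R3 := {x | ‖PL x‖ ≤ 1 ∧ ‖PU x‖ ≤ 1}

/-- The linearized flow `T(t)`. -/
def Tmap (σ μ u t : ℝ) (x : R3) : R3 := WithLp.toLp 2 (fun i =>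
  if (i : ℕ) = 0 then exp (σ * t) * (cos (μ * t) * x 0 + sin (μ * t) * x 1)
  else if (i : ℕ) = 1 then exp (σ * t) * (-(sin (μ * t)) * x 0 + cos (μ * t) * x 1)
  else exp (u * t) * x 2)

/-- A C¹ flow on ℝ³. -/
def IsC1Flow (G : ℝ → R3 → R3) : Prop :=
  ContDiff ℝ 1 (fun p : ℝ × R3 => G p.1 p.2) ∧ (∀ x, G 0 x = x) ∧
    ∀ s t x, G (t + s) x = G t (G s x)

/-- `M` is invariant under the flow `G` in the set `N`. -/
def InvariantIn (G : ℝ → R3 → R3) (M N : Set R3) : Prop :=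
  ∀ x ∈ M ∩ N, ∀ I : Set ℝ, (0 : ℝ) ∈ I → I.OrdConnected →
    (∀ t ∈ I, G t x ∈ N) → ∀ t ∈ I, G t x ∈ M

-- auxiliary lemmas
lemma R3norm (v : R3) : ‖v‖ = Real.sqrt ((v 0)^2 + (v 1)^2 + (v 2)^2) := by
  rw [EuclideanSpace.norm_eq]
  congr 1
  simp [Fin.sum_univ_three, Real.norm_eq_abs, sq_abs]

lemma PL0 (v : R3) : PL v 0 = v 0 := by norm_num [PL]
lemma PL1 (v : R3) : PL v 1 = v 1 := by norm_num [PL]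
lemma PL2 (v : R3) : PL v 2 = 0 := by norm_num [PL]
lemma PU0 (v : R3) : PU v 0 = 0 := by norm_num [PU]
lemma PU1 (v : R3) : PU v 1 = 0 := by norm_num [PU]
lemma PU2 (v : R3) : PU v 2 = v 2 := by norm_num [PU]

lemma normPL (v : R3) : ‖PL v‖ = Real.sqrt ((v 0)^2 + (v 1)^2) := by
  rw [R3norm, PL0, PL1, PL2]; ring_nf

lemma normPU (v : R3) : ‖PU v‖ = |v 2| := by
  rw [R3norm, PU0, PU1, PU2]
  rw [show (0:ℝ)^2 + 0^2 + (v 2)^2 = (v 2)^2 by ring, Real.sqrt_sq_eq_abs]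

lemma abs_comp_le (v : R3) (i : Fin 3) : |v i| ≤ ‖v‖ := by
  rw [R3norm, ← Real.sqrt_sq_eq_abs]
  apply Real.sqrt_le_sqrt
  have h0 := sq_nonneg (v 0); have h1 := sq_nonneg (v 1); have h2 := sq_nonneg (v 2)
  fin_cases i
  · show (v 0)^2 ≤ _; linarith
  · show (v 1)^2 ≤ _; linarith
  · show (v 2)^2 ≤ _; linarith

lemma normPL_le (v : R3) : ‖PL v‖ ≤ ‖v‖ := by
  rw [normPL, R3norm]
  apply Real.sqrt_le_sqrt
  nlinarith [sq_nonneg (v 2)]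

lemma PL_add_PU (v : R3) : PL v + PU v = v := by
  ext i
  simp only [PiLp.add_apply]
  fin_cases i <;> simp [PL, PU]

example (a b : R3) (i : Fin 3) : (a - b) i = a i - b i := by
  simp [PiLp.sub_apply]

lemma key_est {σ μ u η : ℝ} {G : ℝ → R3 → R3} (hG : IsC1Flow G)
    (hD2 : ∀ t ∈ Icc (0:ℝ) 1, ∀ x ∈ B1, ∀ y : R3,
      ‖fderiv ℝ (G t) x y - Tmap σ μ u t y‖ ≤ η * ‖y‖)
    {t : ℝ} (ht : t ∈ Icc (0:ℝ) 1)
    (a v : R3) (hseg : ∀ s ∈ Icc (0:ℝ) 1, a + s • v ∈ B1) :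
    ‖G t (a + v) - G t a - Tmap σ μ u t v‖ ≤ η * ‖v‖ := by
  set w := Tmap σ μ u t v with hw
  have hdiff : ∀ p : R3, DifferentiableAt ℝ (G t) p := by
    intro p
    have h1 : DifferentiableAt ℝ (fun q : ℝ × R3 => G q.1 q.2) (t, p) :=
      (hG.1.differentiable one_ne_zero).differentiableAt
    have h2 : DifferentiableAt ℝ (fun x : R3 => ((t, x) : ℝ × R3)) p :=
      (differentiableAt_const t).prodMk differentiableAt_id
    exact h1.comp p h2
  have hg : ∀ s ∈ Icc (0:ℝ) 1, HasDerivWithinAt (fun s : ℝ => G t (a + s • v) - s • w)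
      (fderiv ℝ (G t) (a + s • v) v - w) (Icc (0:ℝ) 1) s := by
    intro s _
    have hline : HasDerivAt (fun s : ℝ => a + s • v) v s := by
      simpa using ((hasDerivAt_id s).smul_const v).const_add a
    have hcomp : HasDerivAt (fun s : ℝ => G t (a + s • v))
        (fderiv ℝ (G t) (a + s • v) v) s :=
      (hdiff (a + s • v)).hasFDerivAt.comp_hasDerivAt s hline
    have hsw : HasDerivAt (fun s : ℝ => s • w) w s := by
      simpa using (hasDerivAt_id s).smul_const w
    exact (hcomp.sub hsw).hasDerivWithinAt
  have hbound : ∀ s ∈ Ico (0:ℝ) 1, ‖fderiv ℝ (G t) (a + s • v) v - w‖ ≤ η * ‖v‖ := by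
    intro s hs
    exact hD2 t ht _ (hseg s ⟨hs.1, hs.2.le⟩) v
  have := norm_image_sub_le_of_norm_deriv_le_segment_01' hg hbound
  have h2 : G t (a + v) - w - G t a = G t (a + v) - G t a - w := by abel
  simpa [h2] using this

lemma PL_PL (v : R3) : PL (PL v) = PL v := by ext i; fin_cases i <;> simp [PL]
lemma PU_PL (v : R3) : PU (PL v) = 0 := by ext i; fin_cases i <;> simp [PL, PU]
lemma PL_PU (v : R3) : PL (PU v) = 0 := by ext i; fin_cases i <;> simp [PL, PU]
lemma PU_PU (v : R3) : PU (PU v) = PU v := by ext i; fin_cases i <;> simp [PU]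
lemma PL_add (a b : R3) : PL (a + b) = PL a + PL b := by
  ext i; simp only [PiLp.add_apply]; fin_cases i <;> simp [PL]
lemma PL_smul (c : ℝ) (a : R3) : PL (c • a) = c • PL a := by
  ext i; simp only [PiLp.smul_apply, smul_eq_mul]; fin_cases i <;> simp [PL]
lemma PU_add (a b : R3) : PU (a + b) = PU a + PU b := by
  ext i; simp only [PiLp.add_apply]; fin_cases i <;> simp [PU]
lemma PU_smul (c : ℝ) (a : R3) : PU (c • a) = c • PU a := by
  ext i; simp only [PiLp.smul_apply, smul_eq_mul]; fin_cases i <;> simp [PU]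

section estimates
variable {u σ μ η rB : ℝ} {G : ℝ → R3 → R3}

lemma vert (hG : IsC1Flow G)
    (hB1B : B1 ⊆ Metric.closedBall (0 : R3) rB)
    (hD2 : ∀ t ∈ Icc (0:ℝ) 1, ∀ x ∈ B1, ∀ y : R3,
      ‖fderiv ℝ (G t) x y - Tmap σ μ u t y‖ ≤ η * ‖y‖)
    (hGB : ∀ t ∈ Icc (0:ℝ) 1, ∀ x ∈ B1, G t x ∈ Metric.closedBall (0 : R3) rB)
    (hLinv : InvariantIn G Lset (Metric.closedBall 0 rB))
    {y : R3} (hy : y ∈ B1) (hy3 : 0 ≤ y 2) {t : ℝ} (ht : t ∈ Icc (0:ℝ) 1) :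
    |G t y 2 - exp (u * t) * y 2| ≤ η * y 2 := by
  have hPLB1 : PL y ∈ B1 := ⟨by rw [PL_PL]; exact hy.1, by rw [PU_PL]; simp⟩
  have hseg : ∀ s ∈ Icc (0:ℝ) 1, PL y + s • PU y ∈ B1 := by
    intro s hs
    constructor
    · rw [PL_add, PL_PL, PL_smul, PL_PU, smul_zero, add_zero]; exact hy.1
    · rw [PU_add, PU_PL, PU_smul, PU_PU, zero_add, norm_smul]
      have h1 : ‖PU y‖ ≤ 1 := hy.2
      have := abs_of_nonneg hs.1
      calc ‖s‖ * ‖PU y‖ ≤ 1 * 1 := by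
            apply mul_le_mul _ h1 (norm_nonneg _) zero_le_one
            rw [Real.norm_eq_abs, this]; exact hs.2
        _ = 1 := by ring
  have hkey := key_est hG hD2 ht (PL y) (PU y) hseg
  rw [PL_add_PU] at hkey
  have hLz : G t (PL y) 2 = 0 := by
    have hmem : PL y ∈ Lset ∩ Metric.closedBall 0 rB := ⟨PL2 y, hB1B hPLB1⟩
    exact hLinv (PL y) hmem (Icc 0 1) (by norm_num) ordConnected_Icc
      (fun s hs => hGB s hs _ hPLB1) t ht
  have hw2 : Tmap σ μ u t (PU y) 2 = exp (u * t) * y 2 := by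
    simp [Tmap, PU2]
  have hnv : ‖PU y‖ = y 2 := by rw [normPU, abs_of_nonneg hy3]
  have hcomp := abs_comp_le (G t y - G t (PL y) - Tmap σ μ u t (PU y)) 2
  rw [hnv] at hkey
  have heq : (G t y - G t (PL y) - Tmap σ μ u t (PU y)) 2
      = G t y 2 - exp (u * t) * y 2 := by
    simp [PiLp.sub_apply, hLz, hw2]
  rw [heq] at hcomp
  exact hcomp.trans hkey

lemma horiz (hG : IsC1Flow G)
    (hB1B : B1 ⊆ Metric.closedBall (0 : R3) rB)
    (hD2 : ∀ t ∈ Icc (0:ℝ) 1, ∀ x ∈ B1, ∀ y : R3,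
      ‖fderiv ℝ (G t) x y - Tmap σ μ u t y‖ ≤ η * ‖y‖)
    (hGB : ∀ t ∈ Icc (0:ℝ) 1, ∀ x ∈ B1, G t x ∈ Metric.closedBall (0 : R3) rB)
    (hUinv : InvariantIn G Uset (Metric.closedBall 0 rB))
    {y : R3} (hy : y ∈ B1) {t : ℝ} (ht : t ∈ Icc (0:ℝ) 1) :
    ‖PL (G t y)‖ ≤ (exp (σ * t) + η) * ‖PL y‖ := by
  have hPUB1 : PU y ∈ B1 := ⟨by rw [PL_PU]; simp, by rw [PU_PU]; exact hy.2⟩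
  have hseg : ∀ s ∈ Icc (0:ℝ) 1, PU y + s • PL y ∈ B1 := by
    intro s hs
    constructor
    · rw [PL_add, PL_PU, PL_smul, PL_PL, zero_add, norm_smul]
      calc ‖s‖ * ‖PL y‖ ≤ 1 * 1 := by
            apply mul_le_mul _ hy.1 (norm_nonneg _) zero_le_one
            rw [Real.norm_eq_abs, abs_of_nonneg hs.1]; exact hs.2
        _ = 1 := by ring
    · rw [PU_add, PU_PU, PU_smul, PU_PL, smul_zero, add_zero]; exact hy.2
  have hkey := key_est hG hD2 ht (PU y) (PL y) hseg
  have hadd : PU y + PL y = y := by rw [add_comm, PL_add_PU]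
  rw [hadd] at hkey
  set w := Tmap σ μ u t (PL y) with hwdef
  have hU : G t (PU y) ∈ Uset := by
    have hmem : PU y ∈ Uset ∩ Metric.closedBall 0 rB :=
      ⟨⟨PU0 y, PU1 y⟩, hB1B hPUB1⟩
    exact hUinv (PU y) hmem (Icc 0 1) (by norm_num) ordConnected_Icc
      (fun s hs => hGB s hs _ hPUB1) t ht
  have hPLU : PL (G t (PU y)) = 0 := by
    ext i
    have h0 := hU.1
    have h1 := hU.2
    fin_cases i <;> simp [PL, h0, h1]
  have hw0 : w 0 = exp (σ*t) * (cos (μ*t) * y 0 + sin (μ*t) * y 1) := by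
    simp [hwdef, Tmap, PL0, PL1]
  have hw1 : w 1 = exp (σ*t) * (-(sin (μ*t)) * y 0 + cos (μ*t) * y 1) := by
    simp [hwdef, Tmap, PL0, PL1]
  have hw2 : w 2 = 0 := by simp [hwdef, Tmap, PL2]
  have hnormw : ‖w‖ = exp (σ * t) * ‖PL y‖ := by
    rw [R3norm, normPL]
    have hsum : (w 0)^2 + (w 1)^2 + (w 2)^2
        = (exp (σ*t))^2 * ((y 0)^2 + (y 1)^2) := by
      rw [hw0, hw1, hw2]
      have := sin_sq_add_cos_sq (μ*t)
      nlinarith [this]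
    rw [hsum, Real.sqrt_mul (sq_nonneg _), Real.sqrt_sq (exp_pos _).le]
  have hsplit : G t y = (G t y - G t (PU y) - w) + G t (PU y) + w := by abel
  have hPLsub : PL (G t y)
      = PL (G t y - G t (PU y) - w) + PL (G t (PU y)) + PL w := by
    conv_lhs => rw [hsplit]
    rw [PL_add, PL_add]
  have hPLw : PL w = w := by
    ext i; fin_cases i <;> simp [PL, hw2]
  calc ‖PL (G t y)‖
      ≤ ‖PL (G t y - G t (PU y) - w)‖ + ‖PL (G t (PU y))‖ + ‖PL w‖ := by
        rw [hPLsub]; exact norm_add₃_le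
    _ ≤ η * ‖PL y‖ + 0 + exp (σ * t) * ‖PL y‖ := by
        gcongr ?_ + ?_ + ?_
        · exact (normPL_le _).trans hkey
        · rw [hPLU]; simp
        · rw [hPLw, hnormw]
    _ = (exp (σ * t) + η) * ‖PL y‖ := by ring

end estimates

theorem statement10
    (u σ μ η rB : ℝ) (hu : 0 < u) (hσ : σ < 0) (hμ : 0 < μ) (hη : 0 < η)
    (hB1B : B1 ⊆ Metric.closedBall (0 : R3) rB)
    (G : ℝ → R3 → R3) (hG : IsC1Flow G) (hG0 : ∀ t : ℝ, G t 0 = 0)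
    (hD2 : ∀ t ∈ Icc (0:ℝ) 1, ∀ x ∈ B1, ∀ y : R3,
      ‖fderiv ℝ (G t) x y - Tmap σ μ u t y‖ ≤ η * ‖y‖)
    (hGB : ∀ t ∈ Icc (0:ℝ) 1, ∀ x ∈ B1, G t x ∈ Metric.closedBall (0 : R3) rB)
    (hLinv : InvariantIn G Lset (Metric.closedBall 0 rB))
    (hUinv : InvariantIn G Uset (Metric.closedBall 0 rB))
    (hησ : η < exp σ) (hησ1 : exp σ + η < 1) (hσu : 0 < σ + u) :
    ∀ x : R3, ‖PL x‖ = 1 → 0 < x 2 → x 2 < 1 →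
      ∃ t > 0, (∀ s ∈ Ico (0 : ℝ) t, 0 < G s x 2 ∧ G s x 2 < 1) ∧ G t x 2 = 1 := by
  intro x hPLx hx2pos hx2lt
  set f : ℝ → ℝ := fun t => G t x 2 with hf
  have hcont : Continuous f := by
    have h1 : Continuous (fun t : ℝ => G t x) :=
      hG.1.continuous.comp (continuous_id.prodMk continuous_const)
    exact (PiLp.continuous_apply 2 _ (2 : Fin 3)).comp h1
  have hexpσ1 : exp σ < 1 := by
    have := Real.exp_lt_exp.2 hσ; rwa [Real.exp_zero] at this
  have hηlt1 : η < 1 := hησ.trans hexpσ1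
  have hlamgt : 1 < exp u - η := by
    have h1 := Real.add_one_le_exp u
    have h2 := Real.add_one_le_exp σ
    linarith
  set lam : ℝ := exp u - η with hlam
  have hxB1 : x ∈ B1 :=
    ⟨le_of_eq hPLx, by rw [normPU, abs_of_nonneg hx2pos.le]; exact hx2lt.le⟩
  have main : ∀ n : ℕ, (∀ k : ℕ, k ≤ n → f k ≤ 1) →
      G (n:ℝ) x ∈ B1 ∧ lam ^ n * x 2 ≤ f n := by
    intro n
    induction n with
    | zero =>
      intro _
      refine ⟨?_, ?_⟩
      · simpa [hG.2.1] using hxB1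
      · simp [hf, hG.2.1]
    | succ n ih =>
      intro h
      obtain ⟨hyB1, hylb⟩ := ih (fun k hk => h k (hk.trans (Nat.le_succ n)))
      set y := G (n:ℝ) x with hy
      have hy2pos : 0 < y 2 := lt_of_lt_of_le (by positivity) hylb
      have hstep : G ((n+1 : ℕ):ℝ) x = G 1 y := by
        rw [show ((n+1:ℕ):ℝ) = 1 + (n:ℝ) by push_cast; ring, hG.2.2]
      have ht1 : (1:ℝ) ∈ Icc (0:ℝ) 1 := ⟨zero_le_one, le_refl 1⟩
      have hv := vert hG hB1B hD2 hGB hLinv hyB1 hy2pos.le ht1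
      have hh := horiz hG hB1B hD2 hGB hUinv hyB1 ht1
      rw [mul_one] at hv hh
      have habs := abs_le.1 hv
      have hlow : lam * y 2 ≤ G 1 y 2 := by
        have := habs.1; rw [hlam]; nlinarith
      have hfs : f ((n+1 : ℕ):ℝ) = G 1 y 2 := by rw [hf]; simp only; rw [hstep]
      have hfs1 : G 1 y 2 ≤ 1 := by rw [← hfs]; exact h (n+1) le_rfl
      refine ⟨?_, ?_⟩
      · rw [hstep]
        refine ⟨?_, ?_⟩
        · calc ‖PL (G 1 y)‖ ≤ (exp σ + η) * ‖PL y‖ := hh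
            _ ≤ 1 * 1 := by
                apply mul_le_mul _ hyB1.1 (norm_nonneg _) zero_le_one
                linarith
            _ = 1 := by ring
        · rw [normPU]
          have hpos : 0 < G 1 y 2 := lt_of_lt_of_le (by positivity) hlow
          rw [abs_of_nonneg hpos.le]; exact hfs1
      · rw [hfs]
        calc lam ^ (n+1) * x 2 = lam * (lam ^ n * x 2) := by ring
          _ ≤ lam * y 2 := by
              apply mul_le_mul_of_nonneg_left hylb (by linarith)
          _ ≤ G 1 y 2 := hlow
  have hNex : ∃ n : ℕ, 1 < f n := by
    by_contra hcon
    push_neg at hcon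
    obtain ⟨n, hn⟩ := pow_unbounded_of_one_lt (1 / x 2) hlamgt
    have h1 := (main n (fun k _ => hcon k)).2
    have h2 : lam ^ n * x 2 ≤ 1 := h1.trans (hcon n)
    rw [div_lt_iff₀ hx2pos] at hn
    rw [hlam] at h2
    linarith
  set N := Nat.find hNex with hNdef
  have hfN : 1 < f N := Nat.find_spec hNex
  have hmin : ∀ k : ℕ, k < N → f k ≤ 1 := fun k hk => not_lt.1 (Nat.find_min hNex hk)
  have hSclosed : IsClosed (Icc (0:ℝ) (N:ℝ) ∩ {t | 1 ≤ f t}) :=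
    isClosed_Icc.inter (isClosed_le continuous_const hcont)
  have hSne : (Icc (0:ℝ) (N:ℝ) ∩ {t | 1 ≤ f t}).Nonempty :=
    ⟨(N:ℝ), ⟨Nat.cast_nonneg N, le_refl _⟩, hfN.le⟩
  have hSbdd : BddBelow (Icc (0:ℝ) (N:ℝ) ∩ {t | 1 ≤ f t}) :=
    ⟨0, fun t ht => ht.1.1⟩
  set t0 := sInf (Icc (0:ℝ) (N:ℝ) ∩ {t | 1 ≤ f t}) with ht0def
  have ht0S : t0 ∈ Icc (0:ℝ) (N:ℝ) ∩ {t | 1 ≤ f t} := hSclosed.csInf_mem hSne hSbdd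
  have ht0nonneg : 0 ≤ t0 := ht0S.1.1
  have hlt1 : ∀ s, 0 ≤ s → s < t0 → f s < 1 := by
    intro s hs0 hst
    by_contra hcon; push_neg at hcon
    have hsS : s ∈ Icc (0:ℝ) (N:ℝ) ∩ {t | 1 ≤ f t} :=
      ⟨⟨hs0, hst.le.trans ht0S.1.2⟩, hcon⟩
    exact absurd (csInf_le hSbdd hsS) (not_le.2 hst)
  have hf0 : f 0 = x 2 := by simp [hf, hG.2.1]
  have hft0 : f t0 = 1 := by
    have h1 : (1:ℝ) ∈ Icc (f 0) (f t0) := ⟨by rw [hf0]; exact hx2lt.le, ht0S.2⟩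
    obtain ⟨s, hsmem, hfs⟩ := intermediate_value_Icc ht0nonneg hcont.continuousOn h1
    rcases lt_or_eq_of_le hsmem.2 with hc | hc
    · exact absurd hfs (ne_of_lt (hlt1 s hsmem.1 hc))
    · rw [← hc]; exact hfs
  have ht0pos : 0 < t0 := by
    rcases ht0nonneg.lt_or_eq with hc | hc
    · exact hc
    · exfalso; rw [← hc] at hft0; rw [hf0] at hft0; linarith
  refine ⟨t0, ht0pos, ?_, hft0⟩
  intro s hs
  refine ⟨?_, hlt1 s hs.1 hs.2⟩
  set n := ⌊s⌋₊ with hn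
  have hn_le : (n:ℝ) ≤ s := Nat.floor_le hs.1
  have hr1 : s - n < 1 := by
    have := Nat.lt_floor_add_one s; rw [← hn] at this; linarith
  have hnN : n < N := by
    have h1 : (n:ℝ) < (N:ℝ) := lt_of_le_of_lt hn_le (lt_of_lt_of_le hs.2 ht0S.1.2)
    exact_mod_cast h1
  have hkle : ∀ k : ℕ, k ≤ n → f k ≤ 1 := fun k hk => hmin k (lt_of_le_of_lt hk hnN)
  obtain ⟨hyB1, hylb⟩ := main n hkle
  set y := G (n:ℝ) x with hy
  have hy2pos : 0 < y 2 := lt_of_lt_of_le (by positivity) hylb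
  have hflow : G s x = G (s - n) y := by
    have h1 := hG.2.2 (n:ℝ) (s - n) x
    rw [show (s - (n:ℝ)) + (n:ℝ) = s by ring] at h1
    exact h1
  have htr : s - (n:ℝ) ∈ Icc (0:ℝ) 1 := ⟨by linarith, hr1.le⟩
  have hv := vert hG hB1B hD2 hGB hLinv hyB1 hy2pos.le htr
  have habs := abs_le.1 hv
  have hexp1 : 1 ≤ exp (u * (s - ↑n)) := by
    apply Real.one_le_exp
    have : 0 ≤ s - (n:ℝ) := by linarith
    positivity
  have hpos : 0 < G (s - ↑n) y 2 := by nlinarith [habs.1]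
  show 0 < f s
  rw [hf]; simp only; rw [hflow]; exact hpos
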